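/- Let a=(a_1,...,a_n) be a weakly increasing real sequence and let e=(e_1,...,e_n) be a real sequence such that e is a restricted growth sequence relative to a (cap sense). Then every entry of the matrix M_{e→a} is non-negative. -/

import Mathlib

open Polynomial Finset

/-- `IsCOB n a e M` says that `M` is the change-of-basis matrix `M_{e→a}`:
for each `0 ≤ m ≤ n`, the entry `M m k` is the coefficient of `∏_{i=1}^k (x - a_i)`
in the expansion of `∏_{i=1}^m (x - e_i)` in the basis
`1, (x-a₁), …, ∏_{i=1}^n (x-a_i)`.  (Sequences are 0-indexed: `a i` is `a_{i+1}`.)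
Since that basis expansion is unique, this characterizes `M_{e→a}` uniquely. -/
def IsCOB (n : ℕ) (a e : ℕ → ℝ) (M : Matrix (Fin (n+1)) (Fin (n+1)) ℝ) : Prop :=
  ∀ m : Fin (n+1),
    (∏ i ∈ Finset.range (m : ℕ), (X - C (e i))) =
      ∑ k : Fin (n+1), C (M m k) * ∏ i ∈ Finset.range (k : ℕ), (X - C (a i))

/-- The cap-index function for the restricted-growth condition (0-indexed version of
`f` with `f(1) = 1`): `capF a e i` is `f(i+1) - 1`, so the cap for `e i` is
`a (capF a e i)`.  The index increments exactly when `e_i` equals its cap. -/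
noncomputable def capF (a e : ℕ → ℝ) : ℕ → ℕ
  | 0 => 0
  | i + 1 => if e i = a (capF a e i) then capF a e i + 1 else capF a e i

/-- `e` is a restricted growth sequence relative to (weakly increasing) `a`
(cap sense): each `e_i` is at most its cap `a_{f(i)}`. -/
def IsRGCap (n : ℕ) (a e : ℕ → ℝ) : Prop :=
  ∀ i, i < n → e i ≤ a (capF a e i)


noncomputable def cAux (a e : ℕ → ℝ) : ℕ → ℕ → ℝ
  | 0, 0 => 1
  | 0, _ + 1 => 0
  | m + 1, 0 => (a 0 - e m) * cAux a e m 0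
  | m + 1, k + 1 => cAux a e m k + (a (k+1) - e m) * cAux a e m (k+1)

lemma cAux_zero_of_lt (a e : ℕ → ℝ) : ∀ m k, m < k → cAux a e m k = 0 := by
  intro m
  induction m with
  | zero => intro k hk; cases k with
    | zero => omega
    | succ k => simp [cAux]
  | succ m ih =>
    intro k hk
    cases k with
    | zero => omega
    | succ k =>
      have h1 : cAux a e m k = 0 := ih k (by omega)
      have h2 : cAux a e m (k+1) = 0 := ih (k+1) (by omega)
      simp [cAux, h1, h2]

lemma cAux_zero_of_lt_cap (a e : ℕ → ℝ) : ∀ m k, k < capF a e m → cAux a e m k = 0 := by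
  intro m
  induction m with
  | zero => intro k hk; simp [capF] at hk
  | succ m ih =>
    intro k hk
    by_cases hc : e m = a (capF a e m)
    · have hcap : capF a e (m+1) = capF a e m + 1 := by simp [capF, hc]
      rw [hcap] at hk
      cases k with
      | zero =>
        rcases Nat.eq_zero_or_pos (capF a e m) with h0 | h0
        · have : a 0 - e m = 0 := by rw [hc, h0]; ring
          simp [cAux, this]
        · simp [cAux, ih 0 h0]
      | succ k =>
        have h1 : cAux a e m k = 0 := ih k (by omega)
        rcases Nat.lt_or_ge (k+1) (capF a e m) with h2 | h2
        · simp [cAux, h1, ih (k+1) h2]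
        · have heq : k + 1 = capF a e m := by omega
          have : a (k+1) - e m = 0 := by rw [heq, hc]; ring
          simp [cAux, h1, this]
    · have hcap : capF a e (m+1) = capF a e m := by simp [capF, hc]
      rw [hcap] at hk
      cases k with
      | zero => simp [cAux, ih 0 hk]
      | succ k => simp [cAux, ih k (by omega), ih (k+1) hk]

lemma cAux_nonneg (n : ℕ) (a e : ℕ → ℝ)
    (ha : ∀ i j, i ≤ j → j < n → a i ≤ a j)
    (he : ∀ i, i < n → e i ≤ a (capF a e i)) :
    ∀ m, m ≤ n → ∀ k, 0 ≤ cAux a e m k := by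
  intro m
  induction m with
  | zero => intro _ k; cases k with
    | zero => simp [cAux]
    | succ k => simp [cAux]
  | succ m ih =>
    intro hm k
    have hmn : m < n := hm
    have key : ∀ j, 0 ≤ (a j - e m) * cAux a e m j := by
      intro j
      by_cases h0 : cAux a e m j = 0
      · simp [h0]
      · have hj1 : capF a e m ≤ j := by
          by_contra h; exact h0 (cAux_zero_of_lt_cap a e m j (by omega))
        have hj2 : j ≤ m := by
          by_contra h; exact h0 (cAux_zero_of_lt a e m j (by omega))
        have : e m ≤ a j :=
          le_trans (he m hmn) (ha _ _ hj1 (by omega))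
        exact mul_nonneg (by linarith) (ih (by omega) j)
    cases k with
    | zero => exact key 0
    | succ k =>
      have := key (k+1)
      have := ih (by omega) k
      simp only [cAux]
      linarith

lemma cAux_expand (a e : ℕ → ℝ) : ∀ m,
    (∏ i ∈ Finset.range m, (X - C (e i))) =
      ∑ k ∈ Finset.range (m+1), C (cAux a e m k) * ∏ i ∈ Finset.range k, (X - C (a i)) := by
  intro m
  induction m with
  | zero => simp [cAux]
  | succ m ih =>
    rw [prod_range_succ, ih, Finset.sum_mul]
    have step : ∀ k, (C (cAux a e m k) * ∏ i ∈ Finset.range k, (X - C (a i))) * (X - C (e m)) =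
        C (cAux a e m k) * ∏ i ∈ Finset.range (k+1), (X - C (a i))
          + C ((a k - e m) * cAux a e m k) * ∏ i ∈ Finset.range k, (X - C (a i)) := by
      intro k
      rw [prod_range_succ, C_mul, C_sub]
      ring
    rw [Finset.sum_congr rfl (fun k _ => step k), Finset.sum_add_distrib]
    -- RHS
    rw [Finset.sum_range_succ' (fun k => C (cAux a e (m+1) k) * ∏ i ∈ Finset.range k, (X - C (a i))) (m+1)]
    have hsplit : ∀ k, C (cAux a e (m+1) (k+1)) * ∏ i ∈ Finset.range (k+1), (X - C (a i)) =
        C (cAux a e m k) * ∏ i ∈ Finset.range (k+1), (X - C (a i))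
          + C ((a (k+1) - e m) * cAux a e m (k+1)) * ∏ i ∈ Finset.range (k+1), (X - C (a i)) := by
      intro k
      show C (cAux a e m k + (a (k+1) - e m) * cAux a e m (k+1)) * _ = _
      rw [C_add]; ring
    rw [Finset.sum_congr rfl (fun k _ => hsplit k), Finset.sum_add_distrib]
    have h0 : C (cAux a e (m+1) 0) * ∏ i ∈ Finset.range 0, (X - C (a i))
        = C ((a 0 - e m) * cAux a e m 0) * ∏ i ∈ Finset.range 0, (X - C (a i)) := rfl
    rw [h0, add_assoc]
    rw [← Finset.sum_range_succ' (fun k => C ((a k - e m) * cAux a e m k) * ∏ i ∈ Finset.range k, (X - C (a i))) (m+1)]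
    rw [Finset.sum_range_succ (fun k => C ((a k - e m) * cAux a e m k) * ∏ i ∈ Finset.range k, (X - C (a i))) (m+1)]
    rw [cAux_zero_of_lt a e m (m+1) (by omega)]
    simp

lemma natDegree_basis (a : ℕ → ℝ) (k : ℕ) :
    (∏ i ∈ Finset.range k, (X - C (a i))).natDegree = k := by
  rw [Polynomial.natDegree_prod_of_monic _ _ (fun i _ => monic_X_sub_C _)]
  simp

lemma monic_basis (a : ℕ → ℝ) (k : ℕ) :
    (∏ i ∈ Finset.range k, (X - C (a i))).Monic :=
  monic_prod_of_monic _ _ (fun i _ => monic_X_sub_C _)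

lemma uniq (a : ℕ → ℝ) : ∀ N (d : ℕ → ℝ),
    (∑ k ∈ Finset.range (N+1), C (d k) * ∏ i ∈ Finset.range k, (X - C (a i))) = 0 →
    ∀ k, k ≤ N → d k = 0 := by
  intro N
  induction N with
  | zero =>
    intro d h k hk
    interval_cases k
    simpa using congrArg (fun p => Polynomial.coeff p 0) h
  | succ N ih =>
    intro d h k hk
    have htop : d (N+1) = 0 := by
      have := congrArg (fun p => Polynomial.coeff p (N+1)) h
      simp only [Polynomial.finset_sum_coeff, Polynomial.coeff_zero] at this
      rw [Finset.sum_range_succ] at this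
      have hz : ∀ j ∈ Finset.range (N+1),
          Polynomial.coeff (C (d j) * ∏ i ∈ Finset.range j, (X - C (a i))) (N+1) = 0 := by
        intro j hj
        rw [Polynomial.coeff_C_mul,
          Polynomial.coeff_eq_zero_of_natDegree_lt (by rw [natDegree_basis]; simp at hj; omega)]
        ring
      rw [Finset.sum_eq_zero hz] at this
      have hc : (∏ i ∈ Finset.range (N+1), (X - C (a i))).coeff (N+1) = 1 := by
        have h1 := (monic_basis a (N+1)).coeff_natDegree
        rwa [natDegree_basis] at h1
      rw [Polynomial.coeff_C_mul, hc, mul_one, zero_add] at this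
      exact this
    rcases Nat.lt_or_ge k (N+1) with h' | h'
    · apply ih d _ k (by omega)
      rw [Finset.sum_range_succ, htop] at h
      simpa using h
    · have : k = N+1 := by omega
      rw [this]; exact htop

theorem statement15_aux (n : ℕ) (a e : ℕ → ℝ)
    (ha : ∀ i j, i ≤ j → j < n → a i ≤ a j)
    (he : ∀ i, i < n → e i ≤ a (capF a e i))
    (M : Matrix (Fin (n+1)) (Fin (n+1)) ℝ) (hM : ∀ m : Fin (n+1),
    (∏ i ∈ Finset.range (m : ℕ), (X - C (e i))) =
      ∑ k : Fin (n+1), C (M m k) * ∏ i ∈ Finset.range (k : ℕ), (X - C (a i))) :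
    ∀ m k : Fin (n+1), 0 ≤ M m k := by
  intro m k
  set d : ℕ → ℝ := fun j => (if h : j < n+1 then M m ⟨j, h⟩ else 0) - cAux a e m j with hd
  have hMsum : ∑ j : Fin (n+1), C (M m j) * ∏ i ∈ Finset.range (j : ℕ), (X - C (a i))
      = ∑ j ∈ Finset.range (n+1),
          C (if h : j < n+1 then M m ⟨j, h⟩ else 0) * ∏ i ∈ Finset.range j, (X - C (a i)) := by
    rw [← Fin.sum_univ_eq_sum_range]
    apply Finset.sum_congr rfl
    intro j _
    rw [dif_pos j.isLt]
  have hcsum : (∏ i ∈ Finset.range (m : ℕ), (X - C (e i)))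
      = ∑ j ∈ Finset.range (n+1), C (cAux a e (m : ℕ) j) * ∏ i ∈ Finset.range j, (X - C (a i)) := by
    rw [cAux_expand a e (m : ℕ)]
    apply Finset.sum_subset
    · intro x hx; simp at hx ⊢; omega
    · intro x _ hx
      simp only [Finset.mem_range, not_lt] at hx
      rw [cAux_zero_of_lt a e _ _ (by omega)]
      simp
  have hzero : (∑ j ∈ Finset.range (n+1), C (d j) * ∏ i ∈ Finset.range j, (X - C (a i))) = 0 := by
    have := (hM m).symm.trans hcsum
    rw [hMsum] at this
    simp only [hd, C_sub, sub_mul]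
    rw [Finset.sum_sub_distrib, this, sub_self]
  have := uniq a n d hzero (k : ℕ) (by omega)
  have hk : M m k = cAux a e (m : ℕ) (k : ℕ) := by
    have h' : (k:ℕ) < n+1 := k.isLt
    simp only [hd, dif_pos h'] at this
    have : M m ⟨(k:ℕ), h'⟩ = cAux a e (m:ℕ) (k:ℕ) := by linarith
    simpa using this
  rw [hk]
  exact cAux_nonneg n a e ha he (m : ℕ) (by omega) (k : ℕ)

theorem statement15 (n : ℕ) (a e : ℕ → ℝ)
    (ha : ∀ i j, i ≤ j → j < n → a i ≤ a j)
    (he : IsRGCap n a e)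
    (M : Matrix (Fin (n+1)) (Fin (n+1)) ℝ) (hM : IsCOB n a e M) :
    ∀ m k : Fin (n+1), 0 ≤ M m k :=
  statement15_aux n a e ha he M hM
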